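/- Let ξ > 0 and let f : [0, 4/ξ] → ℝ be continuous. Then lim_{n→∞} (1/n)·∑_{p=1}^{n} f((4/ξ)·sin²(pπ/(2(n+1)))) = (1/π)·∫_0^π f((4/ξ)·sin²(k/2)) dk, and moreover (1/π)·∫_0^π f((4/ξ)·sin²(k/2)) dk = (ξ/(4π))·∫_0^{4/ξ} f(λ) / √((ξλ/4)·(1 − ξλ/4)) dλ. In particular, the empirical distribution of the eigenvalues λ_p = (4/ξ)·sin²(pπ/(2(n+1))) of the n × n tridiagonal Toeplitz matrix M_n(ξ) converges to the density proportional to ξ/√((ξλ/4)(1 − ξλ/4)) on (0, 4/ξ). -/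

import Mathlib

open Real Filter MeasureTheory intervalIntegral


lemma riemann_aux (g : ℝ → ℝ) (hg : ContinuousOn g (Set.Icc 0 π)) :
    Filter.Tendsto (fun m : ℕ => (π / m) * ∑ p ∈ Finset.range m, g ((↑(p + 1)) * (π / m)))
      Filter.atTop (nhds (∫ x in (0:ℝ)..π, g x)) := by
  rw [Metric.tendsto_atTop]
  intro ε hε
  have hεπ : 0 < ε / (2 * π) := by positivity
  have hu := isCompact_Icc.uniformContinuousOn_of_continuous hg
  rw [Metric.uniformContinuousOn_iff] at hu
  obtain ⟨δ, hδ, hδ'⟩ := hu (ε / (2 * π)) hεπ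
  obtain ⟨N0, hN0⟩ := exists_nat_gt (π / δ)
  refine ⟨N0 + 1, fun m hm => ?_⟩
  have hm1 : 1 ≤ m := le_trans (Nat.le_add_left 1 N0) hm
  have hmpos : (0:ℝ) < m := by exact_mod_cast hm1
  have hhpos : 0 < π / m := div_pos pi_pos hmpos
  have hhδ : π / m < δ := by
    rw [div_lt_iff₀ hmpos]
    have h1 : π / δ < (m:ℝ) := lt_of_lt_of_le hN0
      (by exact_mod_cast le_trans (Nat.le_succ N0) hm)
    calc π = (π / δ) * δ := by field_simp
    _ < m * δ := by exact mul_lt_mul_of_pos_right h1 hδ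
    _ = δ * m := mul_comm _ _
  have hmh : (m:ℝ) * (π / m) = π := by field_simp
  have hmem : ∀ i : ℕ, i ≤ m → (i:ℝ) * (π / m) ∈ Set.Icc (0:ℝ) π := by
    intro i hi
    constructor
    · positivity
    · calc (i:ℝ) * (π / m) ≤ (m:ℝ) * (π / m) := by
            apply mul_le_mul_of_nonneg_right _ hhpos.le
            exact_mod_cast hi
      _ = π := hmh
  have hsub : ∀ i : ℕ, i < m →
      Set.Icc ((i:ℝ) * (π / m)) ((↑(i+1)) * (π / m)) ⊆ Set.Icc (0:ℝ) π := by
    intro i hi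
    apply Set.Icc_subset_Icc (hmem i hi.le).1 (hmem (i+1) hi).2
  have hle : ∀ i : ℕ, (i:ℝ) * (π / m) ≤ (↑(i+1)) * (π / m) := by
    intro i
    apply mul_le_mul_of_nonneg_right _ hhpos.le
    exact_mod_cast Nat.le_succ i
  have hint : ∀ i : ℕ, i < m →
      IntervalIntegrable g volume ((i:ℝ) * (π / m)) ((↑(i+1)) * (π / m)) := by
    intro i hi
    apply ContinuousOn.intervalIntegrable
    apply hg.mono
    rw [Set.uIcc_of_le (hle i)]
    exact hsub i hi
  have key : ∫ x in (0:ℝ)..π, g x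
      = ∑ i ∈ Finset.range m, ∫ x in ((i:ℝ) * (π / m))..((↑(i+1)) * (π / m)), g x := by
    rw [intervalIntegral.sum_integral_adjacent_intervals hint]
    norm_num [hmh]
  rw [Real.dist_eq, key, Finset.mul_sum, ← Finset.sum_sub_distrib]
  have hbound : ∀ i ∈ Finset.range m,
      |(π / m) * g ((↑(i+1)) * (π / m)) - ∫ x in ((i:ℝ) * (π / m))..((↑(i+1)) * (π / m)), g x|
        ≤ ε / (2 * π) * (π / m) := by
    intro i hi
    rw [Finset.mem_range] at hi
    have hdiff : (↑(i+1):ℝ) * (π / m) - (i:ℝ) * (π / m) = π / m := by push_cast; ring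
    have step : (π / m) * g ((↑(i+1)) * (π / m))
        = ∫ _x in ((i:ℝ) * (π / m))..((↑(i+1)) * (π / m)), g ((↑(i+1)) * (π / m)) := by
      rw [intervalIntegral.integral_const, hdiff, smul_eq_mul]
    rw [step, ← intervalIntegral.integral_sub intervalIntegrable_const (hint i hi)]
    have hb := intervalIntegral.norm_integral_le_of_norm_le_const
      (C := ε / (2 * π)) (f := fun x => g ((↑(i+1)) * (π / m)) - g x)
      (a := (i:ℝ) * (π / m)) (b := (↑(i+1)) * (π / m)) ?_
    · rw [Real.norm_eq_abs] at hb
      calc |∫ x in ((i:ℝ) * (π / m))..((↑(i+1)) * (π / m)), (g ((↑(i+1)) * (π / m)) - g x)|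
          ≤ ε / (2 * π) * |(↑(i+1):ℝ) * (π / m) - (i:ℝ) * (π / m)| := hb
        _ = ε / (2 * π) * (π / m) := by rw [hdiff, abs_of_pos hhpos]
    · intro x hx
      rw [Set.uIoc_of_le (hle i)] at hx
      have hx1 : x ∈ Set.Icc (0:ℝ) π := hsub i hi ⟨hx.1.le, hx.2⟩
      have hx2 : (↑(i+1):ℝ) * (π / m) ∈ Set.Icc (0:ℝ) π := hmem (i+1) hi
      have hdist : dist ((↑(i+1):ℝ) * (π / m)) x < δ := by
        rw [Real.dist_eq, abs_of_nonneg (by linarith [hx.2])]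
        have : (↑(i+1):ℝ) * (π / m) - x < (↑(i+1):ℝ) * (π / m) - (i:ℝ) * (π / m) := by
          linarith [hx.1]
        rw [hdiff] at this
        linarith
      have := hδ' _ hx2 _ hx1 hdist
      rw [Real.dist_eq] at this
      rw [Real.norm_eq_abs]
      exact this.le
  calc |∑ i ∈ Finset.range m, ((π / m) * g ((↑(i+1)) * (π / m))
          - ∫ x in ((i:ℝ) * (π / m))..((↑(i+1)) * (π / m)), g x)|
      ≤ ∑ i ∈ Finset.range m, |(π / m) * g ((↑(i+1)) * (π / m))
          - ∫ x in ((i:ℝ) * (π / m))..((↑(i+1)) * (π / m)), g x| :=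
        Finset.abs_sum_le_sum_abs _ _
    _ ≤ ∑ _i ∈ Finset.range m, ε / (2 * π) * (π / m) := Finset.sum_le_sum hbound
    _ = m * (ε / (2 * π) * (π / m)) := by rw [Finset.sum_const, Finset.card_range]; ring
    _ = ε / 2 := by field_simp
    _ < ε := by linarith
lemma subst_aux (ξ : ℝ) (hξ : 0 < ξ) (f : ℝ → ℝ)
    (hf : ContinuousOn f (Set.Icc 0 (4 / ξ))) :
    (∫ lam in (0 : ℝ)..(4 / ξ), f lam / Real.sqrt ((ξ * lam / 4) * (1 - ξ * lam / 4)))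
      = (4 / ξ) * ∫ k in (0 : ℝ)..π, f ((4 / ξ) * Real.sin (k / 2) ^ 2) := by
  set φ : ℝ → ℝ := fun k => (4 / ξ) * Real.sin (k / 2) ^ 2 with hφ
  set G : ℝ → ℝ := fun lam => f lam / Real.sqrt ((ξ * lam / 4) * (1 - ξ * lam / 4)) with hG
  have hξ' : (4:ℝ) / ξ > 0 := by positivity
  have hderiv : ∀ k : ℝ, HasDerivAt φ ((2 / ξ) * Real.sin k) k := by
    intro k
    have h1 : HasDerivAt (fun x : ℝ => x / 2) (1 / 2) k := by
      simpa using (hasDerivAt_id k).div_const 2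
    have h2 : HasDerivAt (fun x : ℝ => Real.sin (x / 2)) (Real.cos (k / 2) * (1 / 2)) k :=
      h1.sin
    have h3 := (h2.pow 2).const_mul (4 / ξ)
    refine h3.congr_deriv ?_
    have hs : Real.sin k = 2 * Real.sin (k / 2) * Real.cos (k / 2) := by
      rw [← Real.sin_two_mul]; congr 1; ring
    rw [hs]
    ring
  have hφcont : Continuous φ := by fun_prop
  have hmono : StrictMonoOn φ (Set.Icc 0 π) := by
    apply strictMonoOn_of_deriv_pos (convex_Icc 0 π) hφcont.continuousOn
    intro x hx
    rw [interior_Icc] at hx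
    rw [(hderiv x).deriv]
    exact mul_pos (by positivity) (Real.sin_pos_of_pos_of_lt_pi hx.1 hx.2)
  have hφ0 : φ 0 = 0 := by simp [hφ]
  have hφπ : φ π = 4 / ξ := by
    simp [hφ, Real.sin_pi_div_two]
  have himg : φ '' Set.Ioo 0 π = Set.Ioo 0 (4 / ξ) := by
    apply Set.Subset.antisymm
    · rintro _ ⟨k, hk, rfl⟩
      have hs : 0 < Real.sin (k / 2) :=
        Real.sin_pos_of_pos_of_lt_pi (by linarith [hk.1]) (by linarith [hk.2, pi_pos.le])
      have hc : 0 < Real.cos (k / 2) := by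
        apply Real.cos_pos_of_mem_Ioo
        constructor <;> [linarith [hk.1, pi_pos]; linarith [hk.2]]
      have hs1 : Real.sin (k / 2) ^ 2 < 1 := by
        have := Real.sin_sq_add_cos_sq (k / 2)
        nlinarith
      constructor
      · have := pow_pos hs 2; positivity
      · calc (4 / ξ) * Real.sin (k / 2) ^ 2 < (4 / ξ) * 1 := by
              exact mul_lt_mul_of_pos_left hs1 hξ'
          _ = 4 / ξ := mul_one _
    · have := intermediate_value_Ioo pi_pos.le hφcont.continuousOn
      rw [hφ0, hφπ] at this
      exact this
  have hinj : Set.InjOn φ (Set.Ioo 0 π) := hmono.injOn.mono Set.Ioo_subset_Icc_self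
  have hJ := integral_image_eq_integral_abs_deriv_smul measurableSet_Ioo
    (fun x _ => (hderiv x).hasDerivWithinAt) hinj G
  have hptwise : Set.EqOn (fun k => |(2 / ξ) * Real.sin k| • G (φ k))
      (fun k => (4 / ξ) * f (φ k)) (Set.Ioo 0 π) := by
    intro k hk
    have hsin : 0 < Real.sin k := Real.sin_pos_of_pos_of_lt_pi hk.1 hk.2
    have hs : 0 < Real.sin (k / 2) :=
      Real.sin_pos_of_pos_of_lt_pi (by linarith [hk.1]) (by linarith [hk.2, pi_pos.le])
    have hc : 0 < Real.cos (k / 2) := by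
      apply Real.cos_pos_of_mem_Ioo
      constructor <;> [linarith [hk.1, pi_pos]; linarith [hk.2]]
    have hinner : ξ * φ k / 4 = Real.sin (k / 2) ^ 2 := by
      rw [hφ]; field_simp
    have hone : 1 - Real.sin (k / 2) ^ 2 = Real.cos (k / 2) ^ 2 := by
      have := Real.sin_sq_add_cos_sq (k / 2); linarith
    have hsq : (ξ * φ k / 4) * (1 - ξ * φ k / 4)
        = (Real.sin (k / 2) * Real.cos (k / 2)) ^ 2 := by
      rw [hinner, hone]; ring
    have hsqrt : Real.sqrt ((ξ * φ k / 4) * (1 - ξ * φ k / 4)) = Real.sin k / 2 := by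
      rw [hsq, Real.sqrt_sq (by positivity)]
      have : Real.sin k = 2 * Real.sin (k / 2) * Real.cos (k / 2) := by
        rw [← Real.sin_two_mul]; congr 1; ring
      rw [this]; ring
    show |(2 / ξ) * Real.sin k| • (f (φ k) / Real.sqrt ((ξ * φ k / 4) * (1 - ξ * φ k / 4)))
        = (4 / ξ) * f (φ k)
    rw [hsqrt, abs_of_pos (by positivity), smul_eq_mul]
    field_simp
    ring
  calc (∫ lam in (0 : ℝ)..(4 / ξ), G lam)
      = ∫ lam in Set.Ioo (0:ℝ) (4 / ξ), G lam := by
        rw [intervalIntegral.integral_of_le hξ'.le, MeasureTheory.integral_Ioc_eq_integral_Ioo]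
    _ = ∫ lam in φ '' Set.Ioo 0 π, G lam := by rw [himg]
    _ = ∫ k in Set.Ioo (0:ℝ) π, |(2 / ξ) * Real.sin k| • G (φ k) := hJ
    _ = ∫ k in Set.Ioo (0:ℝ) π, (4 / ξ) * f (φ k) :=
        MeasureTheory.setIntegral_congr_fun measurableSet_Ioo hptwise
    _ = ∫ k in (0:ℝ)..π, (4 / ξ) * f (φ k) := by
        rw [intervalIntegral.integral_of_le pi_pos.le, MeasureTheory.integral_Ioc_eq_integral_Ioo]
    _ = (4 / ξ) * ∫ k in (0:ℝ)..π, f (φ k) := intervalIntegral.integral_const_mul _ _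

theorem toeplitz_spectral_distribution (ξ : ℝ) (hξ : 0 < ξ) (f : ℝ → ℝ)
    (hf : ContinuousOn f (Set.Icc 0 (4 / ξ))) :
    Filter.Tendsto
      (fun n : ℕ =>
        (1 / (n : ℝ)) *
          ∑ p ∈ Finset.Icc 1 n, f ((4 / ξ) * Real.sin ((p : ℝ) * π / (2 * (n + 1))) ^ 2))
      Filter.atTop
      (nhds ((1 / π) * ∫ k in (0 : ℝ)..π, f ((4 / ξ) * Real.sin (k / 2) ^ 2))) ∧
    (1 / π) * (∫ k in (0 : ℝ)..π, f ((4 / ξ) * Real.sin (k / 2) ^ 2)) =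
      (ξ / (4 * π)) *
        ∫ lam in (0 : ℝ)..(4 / ξ),
          f lam / Real.sqrt ((ξ * lam / 4) * (1 - ξ * lam / 4)) := by
  have hξ4 : (0:ℝ) < 4 / ξ := by positivity
  have hgcont : ContinuousOn (fun k => f ((4 / ξ) * Real.sin (k / 2) ^ 2)) (Set.Icc 0 π) := by
    apply hf.comp (Continuous.continuousOn (by fun_prop))
    intro k _
    constructor
    · positivity
    · have h1 : Real.sin (k / 2) ^ 2 ≤ 1 := Real.sin_sq_le_one _
      calc (4 / ξ) * Real.sin (k / 2) ^ 2 ≤ (4 / ξ) * 1 :=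
            mul_le_mul_of_nonneg_left h1 hξ4.le
        _ = 4 / ξ := mul_one _
  constructor
  · have h1 := riemann_aux _ hgcont
    have h2 : Filter.Tendsto
        (fun n : ℕ => (π / (↑(n+1):ℝ)) * ∑ p ∈ Finset.range (n+1),
          f ((4 / ξ) * Real.sin ((↑(p+1) * (π / (↑(n+1):ℝ))) / 2) ^ 2))
        Filter.atTop (nhds (∫ k in (0 : ℝ)..π, f ((4 / ξ) * Real.sin (k / 2) ^ 2))) :=
      h1.comp (tendsto_add_atTop_nat 1)
    have htail : Filter.Tendsto
        (fun n : ℕ => (π / (↑(n+1):ℝ)) * f ((4 / ξ) * Real.sin (π / 2) ^ 2))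
        Filter.atTop (nhds 0) := by
      have h0 : Filter.Tendsto
          (fun n : ℕ => (π * f ((4 / ξ) * Real.sin (π / 2) ^ 2)) * (1 / ((n:ℝ) + 1)))
          Filter.atTop (nhds ((π * f ((4 / ξ) * Real.sin (π / 2) ^ 2)) * 0)) :=
        tendsto_const_nhds.mul tendsto_one_div_add_atTop_nhds_zero_nat
      rw [mul_zero] at h0
      apply h0.congr
      intro n
      push_cast
      ring
    have h3 : Filter.Tendsto
        (fun n : ℕ => (π / (↑(n+1):ℝ)) * ∑ p ∈ Finset.range n,
          f ((4 / ξ) * Real.sin ((↑(p+1) * (π / (↑(n+1):ℝ))) / 2) ^ 2))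
        Filter.atTop (nhds (∫ k in (0 : ℝ)..π, f ((4 / ξ) * Real.sin (k / 2) ^ 2))) := by
      have hsub := h2.sub htail
      rw [sub_zero] at hsub
      apply hsub.congr
      intro n
      have hne : ((n:ℝ) + 1) ≠ 0 := by positivity
      have hlast : (↑(n+1):ℝ) * (π / (↑(n+1):ℝ)) / 2 = π / 2 := by
        push_cast
        field_simp
      rw [Finset.sum_range_succ, mul_add, hlast]
      ring
    have hc : Filter.Tendsto (fun n : ℕ => ((↑(n+1):ℝ)) / ((n:ℝ) * π))
        Filter.atTop (nhds (1 / π)) := by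
      have h0 : Filter.Tendsto (fun n : ℕ => (1 + 1 / (n:ℝ)) * (1 / π))
          Filter.atTop (nhds ((1 + 0) * (1 / π))) :=
        (tendsto_const_nhds.add tendsto_one_div_atTop_nhds_zero_nat).mul tendsto_const_nhds
      rw [add_zero, one_mul] at h0
      apply h0.congr'
      filter_upwards [Filter.eventually_ge_atTop 1] with n hn
      have hne : (n:ℝ) ≠ 0 := by
        have : (0:ℝ) < n := by exact_mod_cast hn
        linarith
      push_cast
      field_simp
    have hmul := hc.mul h3
    apply hmul.congr'
    filter_upwards [Filter.eventually_ge_atTop 1] with n hn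
    have hnpos : (0:ℝ) < n := by exact_mod_cast hn
    have hne : (n:ℝ) ≠ 0 := ne_of_gt hnpos
    have hne1 : (↑(n+1):ℝ) ≠ 0 := by positivity
    have hsumeq : ∑ p ∈ Finset.Icc 1 n, f ((4 / ξ) * Real.sin ((p : ℝ) * π / (2 * (n + 1))) ^ 2)
        = ∑ p ∈ Finset.range n,
            f ((4 / ξ) * Real.sin ((↑(p+1) * (π / (↑(n+1):ℝ))) / 2) ^ 2) := by
      rw [← Finset.Ico_add_one_right_eq_Icc, Finset.sum_Ico_eq_sum_range]
      norm_num
      apply Finset.sum_congr rfl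
      intro i _
      have hne' : ((n:ℝ) + 1) ≠ 0 := by positivity
      have harg : (1 + (i:ℝ)) * π / (2 * ((n:ℝ) + 1))
          = ((i:ℝ) + 1) * (π / ((n:ℝ) + 1)) / 2 := by
        field_simp
        ring
      push_cast
      rw [harg]
    rw [hsumeq]
    field_simp
  · rw [subst_aux ξ hξ f hf]
    have hπ : π ≠ 0 := ne_of_gt pi_pos
    have hξ' : ξ ≠ 0 := ne_of_gt hξ
    field_simp
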